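/- Let G₁ and G₂ be torsion-free directed partially ordered groups, n ≥ 1, and let f : Γ(ℤ ⃗× G₁, (n,0)) → Γ(ℤ ⃗× G₂, (n,0)) be a morphism of pseudo-effect algebras (f(0)=0, f(1)=1, additive on existing sums). Then f maps each component Eᵢ = {(i,g)} ∩ E of the n-decomposition of the first algebra into the corresponding component Fᵢ of the second, and there exists a unique po-group homomorphism h : G₁ → G₂ such that f(0,g) = (0, h(g)) for all g ∈ G₁⁺. -/

import Mathlib

/-- A pseudo-effect algebra (PEA): a structure with a partial addition `add`
(with domain of definition `D`), a zero and a one, satisfying (PE1)-(PE4)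
together with the (derivable) neutrality of zero. -/
structure PEA (E : Type) where
  /-- `D a b` means that the partial sum `a + b` is defined. -/
  D : E → E → Prop
  /-- The partial addition (its value is relevant only when `D a b` holds). -/
  add : E → E → E
  zero : E
  one : E
  /-- (PE1), definedness part. -/
  assoc_defined : ∀ a b c, (D a b ∧ D (add a b) c) ↔ (D b c ∧ D a (add b c))
  /-- (PE1), equality part. -/
  assoc_eq : ∀ a b c, D a b → D (add a b) c → add (add a b) c = add a (add b c)
  /-- (PE2), right complement. -/
  compl_right : ∀ a, ∃! d, D a d ∧ add a d = one
  /-- (PE2), left complement. -/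
  compl_left : ∀ a, ∃! e, D e a ∧ add e a = one
  /-- (PE3). -/
  pe3 : ∀ a b, D a b →
    (∃ d, D d a ∧ add d a = add a b) ∧ (∃ e, D b e ∧ add b e = add a b)
  /-- (PE4). -/
  pe4_right : ∀ a, D a one → a = zero
  pe4_left : ∀ a, D one a → a = zero
  D_zero_right : ∀ a, D a zero
  D_zero_left : ∀ a, D zero a
  add_zero : ∀ a, add a zero = a
  zero_add : ∀ a, add zero a = a

namespace PEA

variable {E : Type} (P : PEA E)

/-- The induced partial order: `a ≤ b` iff `a + c = b` for some `c`. -/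
def le (a b : E) : Prop := ∃ c, P.D a c ∧ P.add a c = b

/-- The left complement `a⁻`, the unique element with `a⁻ + a = 1`. -/
noncomputable def lneg (a : E) : E := (P.compl_left a).choose

/-- The right complement `a~`, the unique element with `a + a~ = 1`. -/
noncomputable def rneg (a : E) : E := (P.compl_right a).choose

/-- `E` is weakly commutative if `a + b` is defined iff `b + a` is defined. -/
def WeaklyCommutative : Prop := ∀ a b, P.D a b ↔ P.D b a

/-- `E` is symmetric if the two complements coincide. -/
def Symmetric : Prop := ∀ a, P.lneg a = P.rneg a

/-- A state on a PEA: a `[0,1]`-valued map, additive on existing sums, sending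
`0 ↦ 0` and `1 ↦ 1`. -/
def IsState (s : E → ℝ) : Prop :=
  s P.zero = 0 ∧ s P.one = 1 ∧ (∀ a, 0 ≤ s a ∧ s a ≤ 1) ∧
    ∀ a b, P.D a b → s (P.add a b) = s a + s b

/-- An `(n+1)`-valued discrete state: a state whose range is `{0, 1/n, …, 1}`. -/
def IsDiscreteState (n : ℕ) (s : E → ℝ) : Prop :=
  P.IsState s ∧ Set.range s = {x : ℝ | ∃ i ≤ n, x = (i : ℝ) / n}

/-- An ideal: a nonempty downward closed subset closed under existing sums. -/
def IsIdeal (I : Set E) : Prop :=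
  I.Nonempty ∧ (∀ a i, i ∈ I → P.le a i → a ∈ I) ∧
    ∀ i j, i ∈ I → j ∈ I → P.D i j → P.add i j ∈ I

/-- A normal ideal: `a + i = j + a` implies `i ∈ I ↔ j ∈ I`. -/
def IsNormalIdeal (I : Set E) : Prop :=
  P.IsIdeal I ∧ ∀ a i j, P.D a i → P.D j a → P.add a i = P.add j a → (i ∈ I ↔ j ∈ I)

/-- A maximal ideal: proper and not properly contained in a proper ideal. -/
def IsMaximalIdeal (I : Set E) : Prop :=
  P.IsIdeal I ∧ P.one ∉ I ∧ ∀ J, P.IsIdeal J → P.one ∉ J → I ⊆ J → I = J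

/-- `n`-fold partial multiple of an element. -/
def nmul : ℕ → E → E
  | 0, _ => P.zero
  | k + 1, a => P.add (nmul k a) a

/-- Definedness of the `n`-fold partial multiple. -/
def nmulD : ℕ → E → Prop
  | 0, _ => True
  | k + 1, a => nmulD k a ∧ P.D (P.nmul k a) a

/-- The set of elements of infinite isotropic index. -/
def Infinit : Set E := {a | ∀ k, P.nmulD k a}

/-- An `n`-decomposition of a PEA. -/
def IsNDecomp (n : ℕ) (F : ℕ → Set E) : Prop :=
  (∀ i, i ≤ n → (F i).Nonempty) ∧
  (∀ i j, i ≤ n → j ≤ n → i ≠ j → F i ∩ F j = ∅) ∧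
  ((⋃ i ∈ Set.Iic n, F i) = Set.univ) ∧
  (∀ i, i ≤ n → P.lneg '' F i = F (n - i) ∧ P.rneg '' F i = F (n - i)) ∧
  (∀ i j, i ≤ n → j ≤ n → ∀ x ∈ F i, ∀ y ∈ F j, P.D x y →
     i + j ≤ n ∧ P.add x y ∈ F (i + j))

/-- An `n`-perfect PEA: an `n`-decomposition with all sums `Eᵢ + Eⱼ`, `i+j < n`,
existing, and whose bottom slice is the unique maximal ideal. -/
def IsNPerfect (n : ℕ) (F : ℕ → Set E) : Prop :=
  P.IsNDecomp n F ∧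
  (∀ i j, i + j < n → ∀ x ∈ F i, ∀ y ∈ F j, P.D x y) ∧
  (P.IsMaximalIdeal (F 0) ∧ ∀ J, P.IsMaximalIdeal J → J = F 0)

end PEA

set_option linter.unusedSectionVars false
section IntervalPEA

variable {H : Type} [AddGroup H] [PartialOrder H]
  [CovariantClass H H (· + ·) (· ≤ ·)]
  [CovariantClass H H (Function.swap (· + ·)) (· ≤ ·)]

/-- The carrier of the interval `Γ(H, u) = [0, u]` in a po-group `H`. -/
def GammaSet (u : H) : Type := {x : H // 0 ≤ x ∧ x ≤ u}

namespace GammaInterval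

variable (u : H) (hu : 0 ≤ u)

/-- Definedness of the partial addition of `Γ(H,u)`. -/
def gD (a b : GammaSet u) : Prop := a.1 + b.1 ≤ u

open Classical in
/-- The partial addition of `Γ(H,u)` (junk value `0` outside its domain). -/
noncomputable def gadd (a b : GammaSet u) : GammaSet u :=
  if h : a.1 + b.1 ≤ u then ⟨a.1 + b.1, add_nonneg a.2.1 b.2.1, h⟩
  else ⟨0, le_refl 0, hu⟩

lemma gadd_val {a b : GammaSet u} (h : gD u a b) :
    (gadd u hu a b).1 = a.1 + b.1 := by
  have h' : a.1 + b.1 ≤ u := h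
  unfold gadd
  first
    | exact congrArg Subtype.val (dif_pos h')
    | (split_ifs with h1 <;> first | rfl | exact absurd h' h1)

/-- The interval `Γ(H, u)` as a pseudo-effect algebra. -/
noncomputable def Gamma : PEA (GammaSet u) where
  D := gD u
  add := gadd u hu
  zero := ⟨0, le_refl 0, hu⟩
  one := ⟨u, hu, le_refl u⟩
  assoc_defined := by
    intro a b c
    constructor
    · rintro ⟨h1, h2⟩
      have h2a : (gadd u hu a b).1 + c.1 ≤ u := h2
      have h2' : a.1 + b.1 + c.1 ≤ u := by rwa [gadd_val u hu h1] at h2a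
      have h3 : a.1 + (b.1 + c.1) ≤ u := by rwa [← add_assoc]
      have hbc : gD u b c := le_trans (le_add_of_nonneg_left a.2.1) h3
      refine ⟨hbc, ?_⟩
      show a.1 + (gadd u hu b c).1 ≤ u
      rwa [gadd_val u hu hbc]
    · rintro ⟨h1, h2⟩
      have h2a : a.1 + (gadd u hu b c).1 ≤ u := h2
      have h2' : a.1 + (b.1 + c.1) ≤ u := by rwa [gadd_val u hu h1] at h2a
      have hab : gD u a b :=
        le_trans (add_le_add_right (le_add_of_nonneg_right c.2.1) a.1) h2'
      refine ⟨hab, ?_⟩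
      show (gadd u hu a b).1 + c.1 ≤ u
      rw [gadd_val u hu hab, add_assoc]
      exact h2'
  assoc_eq := by
    intro a b c h1 h2
    have h2' : a.1 + b.1 + c.1 ≤ u := by
      have h2a : (gadd u hu a b).1 + c.1 ≤ u := h2
      rwa [gadd_val u hu h1] at h2a
    have h3 : a.1 + (b.1 + c.1) ≤ u := by rwa [← add_assoc]
    have hbc : gD u b c := le_trans (le_add_of_nonneg_left a.2.1) h3
    have habc : gD u a (gadd u hu b c) := by
      show a.1 + (gadd u hu b c).1 ≤ u
      rwa [gadd_val u hu hbc]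
    apply Subtype.ext
    rw [gadd_val u hu h2, gadd_val u hu h1, gadd_val u hu habc, gadd_val u hu hbc,
      add_assoc]
  compl_right := by
    intro a
    have h1 : (0 : H) ≤ -a.1 + u := by
      rw [le_neg_add_iff_add_le, add_zero]; exact a.2.2
    have h2 : -a.1 + u ≤ u := by
      simpa using add_le_add_right (neg_nonpos.mpr a.2.1) u
    have hD : gD u a ⟨-a.1 + u, h1, h2⟩ := by
      show a.1 + (-a.1 + u) ≤ u
      rw [add_neg_cancel_left]
    refine ⟨⟨-a.1 + u, h1, h2⟩, ⟨hD, ?_⟩, ?_⟩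
    · apply Subtype.ext
      rw [gadd_val u hu hD]
      exact add_neg_cancel_left a.1 u
    · rintro y ⟨hy1, hy2⟩
      apply Subtype.ext
      have hv := congrArg Subtype.val hy2
      rw [gadd_val u hu hy1] at hv
      show y.1 = -a.1 + u
      rw [eq_neg_add_iff_add_eq]
      exact hv
  compl_left := by
    intro a
    have h1 : (0 : H) ≤ u + -a.1 := by
      simpa using add_le_add_right a.2.2 (-a.1)
    have h2 : u + -a.1 ≤ u := by
      simpa using add_le_add_left (neg_nonpos.mpr a.2.1) u
    have hD : gD u ⟨u + -a.1, h1, h2⟩ a := by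
      show (u + -a.1) + a.1 ≤ u
      rw [neg_add_cancel_right]
    refine ⟨⟨u + -a.1, h1, h2⟩, ⟨hD, ?_⟩, ?_⟩
    · apply Subtype.ext
      rw [gadd_val u hu hD]
      exact neg_add_cancel_right u a.1
    · rintro y ⟨hy1, hy2⟩
      apply Subtype.ext
      have hv := congrArg Subtype.val hy2
      rw [gadd_val u hu hy1] at hv
      show y.1 = u + -a.1
      rw [eq_add_neg_iff_add_eq]
      exact hv
  pe3 := by
    intro a b h
    constructor
    · have h1 : (0 : H) ≤ a.1 + b.1 + -a.1 := by
        have : a.1 + 0 + -a.1 ≤ a.1 + b.1 + -a.1 :=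
          add_le_add_left (add_le_add_right b.2.1 a.1) (-a.1)
        simpa using this
      have h2 : a.1 + b.1 + -a.1 ≤ u := by
        calc a.1 + b.1 + -a.1 ≤ u + -a.1 := add_le_add_left h (-a.1)
          _ ≤ u + 0 := add_le_add_right (neg_nonpos.mpr a.2.1) u
          _ = u := add_zero u
      have hD : gD u ⟨a.1 + b.1 + -a.1, h1, h2⟩ a := by
        show (a.1 + b.1 + -a.1) + a.1 ≤ u
        rw [neg_add_cancel_right]
        exact h
      refine ⟨⟨a.1 + b.1 + -a.1, h1, h2⟩, hD, ?_⟩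
      apply Subtype.ext
      rw [gadd_val u hu hD, gadd_val u hu h]
      exact neg_add_cancel_right (a.1 + b.1) a.1
    · have h1 : (0 : H) ≤ -b.1 + (a.1 + b.1) := by
        have : -b.1 + b.1 ≤ -b.1 + (a.1 + b.1) :=
          add_le_add_right (le_add_of_nonneg_left a.2.1) (-b.1)
        simpa using this
      have h2 : -b.1 + (a.1 + b.1) ≤ u := by
        calc -b.1 + (a.1 + b.1) ≤ -b.1 + u := add_le_add_right h (-b.1)
          _ ≤ 0 + u := add_le_add_left (neg_nonpos.mpr b.2.1) u
          _ = u := zero_add u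
      have hD : gD u b ⟨-b.1 + (a.1 + b.1), h1, h2⟩ := by
        show b.1 + (-b.1 + (a.1 + b.1)) ≤ u
        rw [add_neg_cancel_left]
        exact h
      refine ⟨⟨-b.1 + (a.1 + b.1), h1, h2⟩, hD, ?_⟩
      apply Subtype.ext
      rw [gadd_val u hu hD, gadd_val u hu h]
      exact add_neg_cancel_left b.1 (a.1 + b.1)
  pe4_right := by
    intro a h
    apply Subtype.ext
    have h' : a.1 + u ≤ u := h
    have h'' : a.1 + u + -u ≤ u + -u := add_le_add_left h' (-u)
    simp only [add_neg_cancel_right, add_neg_cancel] at h''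
    exact le_antisymm h'' a.2.1
  pe4_left := by
    intro a h
    apply Subtype.ext
    have h' : u + a.1 ≤ u := h
    have h'' : -u + (u + a.1) ≤ -u + u := add_le_add_right h' (-u)
    simp only [neg_add_cancel_left, neg_add_cancel] at h''
    exact le_antisymm h'' a.2.1
  D_zero_right := by
    intro a
    show a.1 + 0 ≤ u
    simpa using a.2.2
  D_zero_left := by
    intro a
    show 0 + a.1 ≤ u
    simpa using a.2.2
  add_zero := by
    intro a
    apply Subtype.ext
    have h : gD u a ⟨0, le_refl 0, hu⟩ := by
      show a.1 + 0 ≤ u; simpa using a.2.2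
    rw [gadd_val u hu h]
    exact add_zero a.1
  zero_add := by
    intro a
    apply Subtype.ext
    have h : gD u ⟨0, le_refl 0, hu⟩ a := by
      show 0 + a.1 ≤ u; simpa using a.2.2
    rw [gadd_val u hu h]
    exact zero_add a.1

end GammaInterval

end IntervalPEA

section ZLexSection

/-- The lexicographic product `ℤ ⃗× G`. -/
def ZLex (G : Type) : Type := ℤ × G

namespace ZLex

variable {G : Type} [AddGroup G] [PartialOrder G]
  [CovariantClass G G (· + ·) (· ≤ ·)]
  [CovariantClass G G (Function.swap (· + ·)) (· ≤ ·)]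

instance : AddGroup (ZLex G) := inferInstanceAs (AddGroup (ℤ × G))

/-- Build an element of `ℤ ⃗× G`. -/
def mk (i : ℤ) (g : G) : ZLex G := ((i, g) : ℤ × G)

/-- First (integer) component. -/
def idx (x : ZLex G) : ℤ := (x : ℤ × G).1

/-- Second (group) component. -/
def snd (x : ZLex G) : G := (x : ℤ × G).2

instance : PartialOrder (ZLex G) where
  le p q := idx p < idx q ∨ (idx p = idx q ∧ snd p ≤ snd q)
  le_refl p := Or.inr ⟨rfl, le_refl _⟩
  le_trans p q r := by
    rintro (h | ⟨e, h⟩) (h' | ⟨e', h'⟩)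
    · exact Or.inl (lt_trans h h')
    · exact Or.inl (lt_of_lt_of_eq h e')
    · exact Or.inl (lt_of_eq_of_lt e h')
    · exact Or.inr ⟨e.trans e', le_trans h h'⟩
  le_antisymm p q := by
    rintro (h | ⟨e, h⟩) (h' | ⟨e', h'⟩)
    · exact absurd (lt_trans h h') (lt_irrefl _)
    · exact absurd h (by rw [e']; exact lt_irrefl _)
    · exact absurd h' (by rw [e]; exact lt_irrefl _)
    · have h2 : snd p = snd q := le_antisymm h h'
      show ((idx p, snd p) : ℤ × G) = ((idx q, snd q) : ℤ × G)
      rw [e, h2]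

lemma le_def (p q : ZLex G) :
    p ≤ q ↔ idx p < idx q ∨ (idx p = idx q ∧ snd p ≤ snd q) := Iff.rfl

lemma add_def (p q : ZLex G) :
    p + q = mk (idx p + idx q) (snd p + snd q) := rfl

instance : CovariantClass (ZLex G) (ZLex G) (· + ·) (· ≤ ·) := by
  constructor
  rintro c a b (h | ⟨e, h⟩)
  · exact Or.inl (Int.add_lt_add_left h _)
  · exact Or.inr ⟨by show idx c + idx a = idx c + idx b; rw [e],
      add_le_add_right h _⟩

instance : CovariantClass (ZLex G) (ZLex G) (Function.swap (· + ·)) (· ≤ ·) := by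
  constructor
  rintro c a b (h | ⟨e, h⟩)
  · exact Or.inl (Int.add_lt_add_right h _)
  · exact Or.inr ⟨by show idx a + idx c = idx b + idx c; rw [e],
      add_le_add_left h _⟩

end ZLex

end ZLexSection

section Aux19

namespace GammaInterval
variable {H : Type} [AddGroup H] [PartialOrder H]
  [CovariantClass H H (· + ·) (· ≤ ·)]
  [CovariantClass H H (Function.swap (· + ·)) (· ≤ ·)]
  (u : H) (hu : 0 ≤ u)

lemma Gamma_D : (Gamma u hu).D = gD u := rfl
lemma Gamma_add : (Gamma u hu).add = gadd u hu := rfl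
lemma Gamma_zero_val : (Gamma u hu).zero.1 = 0 := rfl
lemma Gamma_one_val : (Gamma u hu).one.1 = u := rfl

end GammaInterval

namespace ZLexAux

variable {G : Type} [AddGroup G] [PartialOrder G]
  [CovariantClass G G (· + ·) (· ≤ ·)]
  [CovariantClass G G (Function.swap (· + ·)) (· ≤ ·)]

lemma idx_mk (i : ℤ) (g : G) : ZLex.idx (ZLex.mk i g) = i := rfl
lemma snd_mk (i : ℤ) (g : G) : ZLex.snd (ZLex.mk i g) = g := rfl
lemma eta (p : ZLex G) : p = ZLex.mk (ZLex.idx p) (ZLex.snd p) := rfl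
lemma idx_zero' : ZLex.idx (0 : ZLex G) = 0 := rfl
lemma idx_add (p q : ZLex G) : ZLex.idx (p + q) = ZLex.idx p + ZLex.idx q := rfl
lemma snd_add (p q : ZLex G) : ZLex.snd (p + q) = ZLex.snd p + ZLex.snd q := rfl
lemma zero_eq : (0 : ZLex G) = ZLex.mk 0 0 := rfl

lemma mk_inj {i j : ℤ} {g g' : G} (h : ZLex.mk i g = ZLex.mk j g') : i = j ∧ g = g' :=
  ⟨congrArg ZLex.idx h, congrArg ZLex.snd h⟩

lemma mk_eq_mk {i j : ℤ} {g g' : G} (h1 : i = j) (h2 : g = g') :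
    ZLex.mk i g = ZLex.mk j g' := by rw [h1, h2]

lemma mk_le_mk {i j : ℤ} {g g' : G} (hij : i ≤ j) (hg : i = j → g ≤ g') :
    ZLex.mk i g ≤ ZLex.mk j g' := by
  rcases lt_or_eq_of_le hij with h | h
  · exact Or.inl h
  · exact Or.inr ⟨h, hg h⟩

variable (n : ℕ) (hu : (0 : ZLex G) ≤ ZLex.mk (n : ℤ) (0 : G))

local notation "Pg" => GammaInterval.Gamma (ZLex.mk (n : ℤ) (0 : G)) hu

lemma mem0 (hn : 1 ≤ n) {g : G} (hg : 0 ≤ g) :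
    0 ≤ ZLex.mk 0 g ∧ ZLex.mk 0 g ≤ ZLex.mk (n : ℤ) 0 := by
  constructor
  · rw [zero_eq]
    exact mk_le_mk (le_refl 0) (fun _ => hg)
  · exact Or.inl (show (0:ℤ) < (n:ℤ) by exact_mod_cast hn)

lemma idx_nonneg (x : GammaSet (ZLex.mk (n : ℤ) (0:G))) : 0 ≤ ZLex.idx x.1 := by
  rcases x.2.1 with h | ⟨h, _⟩
  · exact le_of_lt h
  · exact le_of_eq h

lemma idx_le (x : GammaSet (ZLex.mk (n : ℤ) (0:G))) : ZLex.idx x.1 ≤ (n:ℤ) := by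
  rcases x.2.2 with h | ⟨h, _⟩
  · exact le_of_lt h
  · exact le_of_eq h

lemma add_val {a b : GammaSet (ZLex.mk (n : ℤ) (0:G))} (h : (Pg).D a b) :
    ((Pg).add a b).1 = a.1 + b.1 :=
  GammaInterval.gadd_val _ hu h

lemma D_of_le {a b : GammaSet (ZLex.mk (n : ℤ) (0:G))}
    (h : a.1 + b.1 ≤ ZLex.mk (n:ℤ) (0:G)) : (Pg).D a b := h

lemma nmul_idx (y : GammaSet (ZLex.mk (n : ℤ) (0:G))) :
    ∀ k : ℕ, (Pg).nmulD k y → ZLex.idx ((Pg).nmul k y).1 = k * ZLex.idx y.1 := by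
  intro k
  induction k with
  | zero => intro _; simp [PEA.nmul]; rfl
  | succ k ih =>
    rintro ⟨h1, h2⟩
    show ZLex.idx ((Pg).add ((Pg).nmul k y) y).1 = _
    rw [add_val n hu h2, idx_add, ih h1]
    push_cast
    ring

lemma idx_zero_nmul (hn : 1 ≤ n) {x : GammaSet (ZLex.mk (n : ℤ) (0:G))}
    (hx : ZLex.idx x.1 = 0) :
    ∀ k : ℕ, (Pg).nmulD k x ∧ ZLex.idx ((Pg).nmul k x).1 = 0 := by
  intro k
  induction k with
  | zero => exact ⟨trivial, rfl⟩
  | succ k ih =>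
    have hD : (Pg).D ((Pg).nmul k x) x := by
      apply D_of_le
      refine Or.inl ?_
      show ZLex.idx (((Pg).nmul k x).1 + x.1) < (n:ℤ)
      rw [idx_add, ih.2, hx]
      exact_mod_cast hn
    refine ⟨⟨ih.1, hD⟩, ?_⟩
    show ZLex.idx ((Pg).add ((Pg).nmul k x) x).1 = 0
    rw [add_val n hu hD, idx_add, ih.2, hx]
    simp

lemma idx_eq_zero_of_all_nmulD (hn : 1 ≤ n) {y : GammaSet (ZLex.mk (n : ℤ) (0:G))}
    (hy : ∀ k, (Pg).nmulD k y) : ZLex.idx y.1 = 0 := by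
  by_contra h
  have hj1 : 1 ≤ ZLex.idx y.1 := lt_of_le_of_ne (idx_nonneg n y) (Ne.symm h)
  have hD : (Pg).D ((Pg).nmul n y) y := (hy (n+1)).2
  have hidx := nmul_idx n hu y n (hy n)
  have hle : ZLex.idx (((Pg).nmul n y).1 + y.1) ≤ (n:ℤ) := by
    rcases hD with h' | ⟨h', _⟩
    · exact le_of_lt h'
    · exact le_of_eq h'
  rw [idx_add, hidx] at hle
  have hn' : (1:ℤ) ≤ (n:ℤ) := by exact_mod_cast hn
  nlinarith [hj1, hn', hle]

def melem (hn : 1 ≤ n) : GammaSet (ZLex.mk (n : ℤ) (0:G)) :=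
  ⟨ZLex.mk 1 0, by
    constructor
    · rw [zero_eq]
      exact mk_le_mk (by norm_num) (fun h => by norm_num at h)
    · exact mk_le_mk (by exact_mod_cast hn) (fun _ => le_refl 0)⟩

lemma melem_val (hn : 1 ≤ n) : (melem n hn : GammaSet (ZLex.mk (n : ℤ) (0:G))).1 = ZLex.mk 1 0 := rfl

lemma nmul_m (hn : 1 ≤ n) : ∀ k : ℕ, k ≤ n →
    (Pg).nmulD k (melem n hn) ∧
    ((Pg).nmul k (melem n hn)).1 = ZLex.mk (k:ℤ) (0:G) := by
  intro k
  induction k with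
  | zero =>
    intro _
    refine ⟨trivial, ?_⟩
    show (0 : ZLex G) = ZLex.mk ((0:ℕ):ℤ) 0
    rw [zero_eq]
    norm_num
  | succ k ih =>
    intro hk
    obtain ⟨h1, h2⟩ := ih (Nat.le_of_succ_le hk)
    have hD : (Pg).D ((Pg).nmul k (melem n hn)) (melem n hn) := by
      apply D_of_le
      rw [h2, melem_val]
      show ZLex.mk ((k:ℤ)+1) ((0:G)+0) ≤ ZLex.mk (n:ℤ) 0
      apply mk_le_mk
      · exact_mod_cast hk
      · intro _; simp
    refine ⟨⟨h1, hD⟩, ?_⟩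
    show ((Pg).add ((Pg).nmul k (melem n hn)) (melem n hn)).1 = _
    rw [add_val n hu hD, h2, melem_val]
    show ZLex.mk ((k:ℤ)+1) ((0:G)+0) = ZLex.mk (((k+1:ℕ)):ℤ) 0
    have h3 : ((k:ℤ)+1) = (((k+1:ℕ)):ℤ) := by push_cast; ring
    rw [h3, add_zero]

end ZLexAux

end Aux19

/-- a PEA morphism `f : Γ(ℤ ⃗× G₁,(n,0)) → Γ(ℤ ⃗× G₂,(n,0))`
(for torsion-free directed po-groups `G₁`, `G₂`) preserves the components of the
`n`-decompositions, and induces a unique po-group homomorphism `h : G₁ → G₂`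
with `f(0,g) = (0, h(g))` for all `g ∈ G₁⁺`. -/
theorem stmt19 (G₁ G₂ : Type) [AddGroup G₁] [PartialOrder G₁]
    [CovariantClass G₁ G₁ (· + ·) (· ≤ ·)]
    [CovariantClass G₁ G₁ (Function.swap (· + ·)) (· ≤ ·)]
    [AddGroup G₂] [PartialOrder G₂]
    [CovariantClass G₂ G₂ (· + ·) (· ≤ ·)]
    [CovariantClass G₂ G₂ (Function.swap (· + ·)) (· ≤ ·)]
    (hdir₁ : ∀ a b : G₁, ∃ c : G₁, a ≤ c ∧ b ≤ c)
    (hdir₂ : ∀ a b : G₂, ∃ c : G₂, a ≤ c ∧ b ≤ c)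
    (htf₁ : ∀ (k : ℤ) (g : G₁), k ≠ 0 → k • g = 0 → g = 0)
    (htf₂ : ∀ (k : ℤ) (g : G₂), k ≠ 0 → k • g = 0 → g = 0)
    (n : ℕ) (hn : 1 ≤ n)
    (P₁ : PEA (GammaSet (ZLex.mk (n : ℤ) (0 : G₁))))
    (hP₁ : P₁ = GammaInterval.Gamma (ZLex.mk (n : ℤ) (0 : G₁)) (by exact Or.inl (show (0 : ℤ) < (n : ℤ) by exact_mod_cast hn)))
    (P₂ : PEA (GammaSet (ZLex.mk (n : ℤ) (0 : G₂))))
    (hP₂ : P₂ = GammaInterval.Gamma (ZLex.mk (n : ℤ) (0 : G₂)) (by exact Or.inl (show (0 : ℤ) < (n : ℤ) by exact_mod_cast hn)))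
    (f : GammaSet (ZLex.mk (n : ℤ) (0 : G₁)) → GammaSet (ZLex.mk (n : ℤ) (0 : G₂)))
    (hf0 : f P₁.zero = P₂.zero) (hf1 : f P₁.one = P₂.one)
    (hfadd : ∀ a b, P₁.D a b →
      P₂.D (f a) (f b) ∧ f (P₁.add a b) = P₂.add (f a) (f b)) :
    (∀ i ≤ n, ∀ x : GammaSet (ZLex.mk (n : ℤ) (0 : G₁)),
      ZLex.idx x.1 = (i : ℤ) → ZLex.idx (f x).1 = (i : ℤ)) ∧
    ∃! h : G₁ →+ G₂,
      (∀ g : G₁, 0 ≤ g → 0 ≤ h g) ∧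
      ∀ (x : GammaSet (ZLex.mk (n : ℤ) (0 : G₁))) (g : G₁), 0 ≤ g →
        x.1 = ZLex.mk 0 g → (f x).1 = ZLex.mk 0 (h g) := by
    classical
  have hu₁ : (0 : ZLex G₁) ≤ ZLex.mk (n:ℤ) 0 :=
    Or.inl (show (0:ℤ) < (n:ℤ) by exact_mod_cast hn)
  have hu₂ : (0 : ZLex G₂) ≤ ZLex.mk (n:ℤ) 0 :=
    Or.inl (show (0:ℤ) < (n:ℤ) by exact_mod_cast hn)
  have hf0' : f (GammaInterval.Gamma (ZLex.mk (n : ℤ) (0:G₁)) hu₁).zero = (GammaInterval.Gamma (ZLex.mk (n : ℤ) (0:G₂)) hu₂).zero := by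
    rw [hP₁, hP₂] at hf0; exact hf0
  have hf1' : f (GammaInterval.Gamma (ZLex.mk (n : ℤ) (0:G₁)) hu₁).one = (GammaInterval.Gamma (ZLex.mk (n : ℤ) (0:G₂)) hu₂).one := by
    rw [hP₁, hP₂] at hf1; exact hf1
  have hfadd' : ∀ a b, (GammaInterval.Gamma (ZLex.mk (n : ℤ) (0:G₁)) hu₁).D a b →
      (GammaInterval.Gamma (ZLex.mk (n : ℤ) (0:G₂)) hu₂).D (f a) (f b) ∧ f ((GammaInterval.Gamma (ZLex.mk (n : ℤ) (0:G₁)) hu₁).add a b) = (GammaInterval.Gamma (ZLex.mk (n : ℤ) (0:G₂)) hu₂).add (f a) (f b) := by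
    rw [hP₁, hP₂] at hfadd; exact hfadd
  have htrans : ∀ (x : GammaSet (ZLex.mk (n : ℤ) (0:G₁))) (k : ℕ), (GammaInterval.Gamma (ZLex.mk (n : ℤ) (0:G₁)) hu₁).nmulD k x →
      (GammaInterval.Gamma (ZLex.mk (n : ℤ) (0:G₂)) hu₂).nmulD k (f x) ∧ f ((GammaInterval.Gamma (ZLex.mk (n : ℤ) (0:G₁)) hu₁).nmul k x) = (GammaInterval.Gamma (ZLex.mk (n : ℤ) (0:G₂)) hu₂).nmul k (f x) := by
    intro x k
    induction k with
    | zero => exact fun _ => ⟨trivial, hf0'⟩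
    | succ k ih =>
      rintro ⟨h1, h2⟩
      obtain ⟨ih1, ih2⟩ := ih h1
      obtain ⟨hD2, heq⟩ := hfadd' _ _ h2
      rw [ih2] at hD2 heq
      exact ⟨⟨ih1, hD2⟩, heq⟩
  have hA : ∀ x : GammaSet (ZLex.mk (n : ℤ) (0:G₁)),
      ZLex.idx x.1 = 0 → ZLex.idx (f x).1 = 0 := by
    intro x hx
    apply ZLexAux.idx_eq_zero_of_all_nmulD n hu₂ hn
    intro k
    exact (htrans x k (ZLexAux.idx_zero_nmul n hu₁ hn hx k).1).1
  have hm1 : ZLex.idx (f (ZLexAux.melem n hn)).1 = 1 := by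
    have hm := ZLexAux.nmul_m n hu₁ hn n (le_refl n)
    have hone : (GammaInterval.Gamma (ZLex.mk (n : ℤ) (0:G₁)) hu₁).nmul n (ZLexAux.melem n hn) = (GammaInterval.Gamma (ZLex.mk (n : ℤ) (0:G₁)) hu₁).one := by
      apply Subtype.ext
      rw [hm.2]
      rfl
    obtain ⟨hD, heq⟩ := htrans _ n hm.1
    rw [hone, hf1'] at heq
    have hidx := ZLexAux.nmul_idx n hu₂ (f (ZLexAux.melem n hn)) n hD
    rw [← heq] at hidx
    have hnn : (n:ℤ) = (n:ℤ) * ZLex.idx (f (ZLexAux.melem n hn)).1 := by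
      rw [← hidx]; rfl
    have hnz : (n:ℤ) ≠ 0 := by
      have := Nat.one_le_iff_ne_zero.mp hn
      exact_mod_cast this
    have h1 : (1:ℤ) = ZLex.idx (f (ZLexAux.melem n hn)).1 :=
      mul_left_cancel₀ hnz (by rw [mul_one]; exact hnn)
    exact h1.symm
  have hmain : ∀ i : ℕ, i ≤ n → ∀ x : GammaSet (ZLex.mk (n : ℤ) (0 : G₁)),
      ZLex.idx x.1 = (i:ℤ) → ZLex.idx (f x).1 = (i:ℤ) := by
    intro i hi x hx
    set g := ZLex.snd x.1 with hgdef
    have hx1 : x.1 = ZLex.mk (i:ℤ) g := by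
      have h := ZLexAux.eta x.1
      rw [hx, ← hgdef] at h
      exact h
    rcases eq_or_lt_of_le hi with hieq | hilt
    · rw [hieq] at hx hx1 ⊢
      have hg : g ≤ 0 := by
        rcases x.2.2 with h | ⟨_, h⟩
        · rw [hx] at h; exact absurd h (lt_irrefl _)
        · exact h
      have hw : 0 ≤ -g := neg_nonneg.mpr hg
      have hDxw : (GammaInterval.Gamma (ZLex.mk (n : ℤ) (0:G₁)) hu₁).D x (⟨ZLex.mk 0 (-g), ZLexAux.mem0 n hn hw⟩ : GammaSet _) := by
        apply ZLexAux.D_of_le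
        rw [hx1]
        show ZLex.mk ((n:ℤ) + 0) (g + -g) ≤ ZLex.mk (n:ℤ) 0
        apply ZLexAux.mk_le_mk
        · simp
        · intro _; simp
      have hone : (GammaInterval.Gamma (ZLex.mk (n : ℤ) (0:G₁)) hu₁).add x ⟨ZLex.mk 0 (-g), ZLexAux.mem0 n hn hw⟩ = (GammaInterval.Gamma (ZLex.mk (n : ℤ) (0:G₁)) hu₁).one := by
        apply Subtype.ext
        rw [ZLexAux.add_val n hu₁ hDxw, hx1]
        show ZLex.mk ((n:ℤ) + 0) (g + -g) = ZLex.mk (n:ℤ) 0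
        exact ZLexAux.mk_eq_mk (by simp) (by simp)
      obtain ⟨hD2, heq⟩ := hfadd' x _ hDxw
      rw [hone, hf1'] at heq
      have hv := congrArg (fun z : GammaSet (ZLex.mk (n:ℤ) (0:G₂)) => ZLex.idx z.1) heq
      simp only [ZLexAux.add_val n hu₂ hD2, ZLexAux.idx_add] at hv
      have hw0 : ZLex.idx (f (⟨ZLex.mk 0 (-g), ZLexAux.mem0 n hn hw⟩ : GammaSet _)).1 = 0 :=
        hA _ rfl
      rw [hw0, add_zero] at hv
      have hv' : (n:ℤ) = ZLex.idx (f x).1 := hv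
      exact hv'.symm
    · obtain ⟨c, h0c, hgc⟩ := hdir₁ 0 (-g)
      have hgc0 : 0 ≤ g + c := by
        have h := add_le_add_right hgc g
        simpa using h
      have hDxe : (GammaInterval.Gamma (ZLex.mk (n : ℤ) (0:G₁)) hu₁).D x (⟨ZLex.mk 0 c, ZLexAux.mem0 n hn h0c⟩ : GammaSet _) := by
        apply ZLexAux.D_of_le
        rw [hx1]
        show ZLex.mk ((i:ℤ) + 0) (g + c) ≤ ZLex.mk (n:ℤ) 0
        refine Or.inl ?_
        show (i:ℤ) + 0 < (n:ℤ)
        omega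
      have hmm := ZLexAux.nmul_m n hu₁ hn i (le_of_lt hilt)
      have hDwz : (GammaInterval.Gamma (ZLex.mk (n : ℤ) (0:G₁)) hu₁).D ((GammaInterval.Gamma (ZLex.mk (n : ℤ) (0:G₁)) hu₁).nmul i (ZLexAux.melem n hn))
          (⟨ZLex.mk 0 (g + c), ZLexAux.mem0 n hn hgc0⟩ : GammaSet _) := by
        apply ZLexAux.D_of_le
        rw [hmm.2]
        show ZLex.mk ((i:ℤ) + 0) (0 + (g + c)) ≤ ZLex.mk (n:ℤ) 0
        refine Or.inl ?_
        show (i:ℤ) + 0 < (n:ℤ)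
        omega
      have hsum : (GammaInterval.Gamma (ZLex.mk (n : ℤ) (0:G₁)) hu₁).add ((GammaInterval.Gamma (ZLex.mk (n : ℤ) (0:G₁)) hu₁).nmul i (ZLexAux.melem n hn))
            ⟨ZLex.mk 0 (g + c), ZLexAux.mem0 n hn hgc0⟩
          = (GammaInterval.Gamma (ZLex.mk (n : ℤ) (0:G₁)) hu₁).add x ⟨ZLex.mk 0 c, ZLexAux.mem0 n hn h0c⟩ := by
        apply Subtype.ext
        rw [ZLexAux.add_val n hu₁ hDwz, ZLexAux.add_val n hu₁ hDxe, hmm.2]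
        conv_rhs => rw [hx1]
        show ZLex.mk ((i:ℤ) + 0) (0 + (g + c))
            = ZLex.mk ((i:ℤ) + 0) (g + c)
        exact ZLexAux.mk_eq_mk rfl (by simp)
      obtain ⟨hD2e, heqe⟩ := hfadd' x _ hDxe
      obtain ⟨hD2z, heqz⟩ := hfadd' _ _ hDwz
      have hfm := htrans (ZLexAux.melem n hn) i hmm.1
      have h1 : ZLex.idx (f ((GammaInterval.Gamma (ZLex.mk (n : ℤ) (0:G₁)) hu₁).add x ⟨ZLex.mk 0 c, ZLexAux.mem0 n hn h0c⟩)).1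
          = ZLex.idx (f x).1 + 0 := by
        rw [heqe, ZLexAux.add_val n hu₂ hD2e, ZLexAux.idx_add,
          hA ⟨ZLex.mk 0 c, ZLexAux.mem0 n hn h0c⟩ rfl]
      have h2 : ZLex.idx (f ((GammaInterval.Gamma (ZLex.mk (n : ℤ) (0:G₁)) hu₁).add x ⟨ZLex.mk 0 c, ZLexAux.mem0 n hn h0c⟩)).1 = (i:ℤ) := by
        rw [← hsum, heqz, ZLexAux.add_val n hu₂ hD2z, ZLexAux.idx_add,
          hA ⟨ZLex.mk 0 (g + c), ZLexAux.mem0 n hn hgc0⟩ rfl, hfm.2,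
          ZLexAux.nmul_idx n hu₂ _ i hfm.1, hm1]
        simp
      simpa using h1.symm.trans h2
  refine ⟨hmain, ?_⟩
  set h0 : G₁ → G₂ := fun g =>
    if hg : 0 ≤ g then ZLex.snd (f ⟨ZLex.mk 0 g, ZLexAux.mem0 n hn hg⟩).1 else 0 with h0def
  have h0spec : ∀ (x : GammaSet (ZLex.mk (n:ℤ) (0:G₁))) (g : G₁) (hg : 0 ≤ g),
      x.1 = ZLex.mk 0 g → (f x).1 = ZLex.mk 0 (h0 g) := by
    intro x g hg hx
    have hxx : x = ⟨ZLex.mk 0 g, ZLexAux.mem0 n hn hg⟩ := Subtype.ext hx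
    have hidx : ZLex.idx (f x).1 = 0 := hA x (by rw [hx]; rfl)
    have h := ZLexAux.eta (f x).1
    rw [hidx] at h
    rw [h]
    apply ZLexAux.mk_eq_mk rfl
    rw [hxx]
    simp only [h0def]
    rw [dif_pos hg]
  have h0nonneg : ∀ g : G₁, 0 ≤ g → 0 ≤ h0 g := by
    intro g hg
    have h := (f (⟨ZLex.mk 0 g, ZLexAux.mem0 n hn hg⟩ : GammaSet _)).2.1
    rw [h0spec ⟨ZLex.mk 0 g, ZLexAux.mem0 n hn hg⟩ g hg rfl] at h
    rcases h with h | ⟨_, h⟩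
    · exact absurd h (lt_irrefl _)
    · exact h
  have h0zero : h0 (0:G₁) = 0 := by
    have h := h0spec (GammaInterval.Gamma (ZLex.mk (n : ℤ) (0:G₁)) hu₁).zero 0 (le_refl 0) rfl
    rw [hf0'] at h
    have h3 : ZLex.mk (0:ℤ) (0:G₂) = ZLex.mk 0 (h0 0) := h
    exact ((ZLexAux.mk_inj h3).2).symm
  have h0add : ∀ g g' : G₁, 0 ≤ g → 0 ≤ g' → h0 (g + g') = h0 g + h0 g' := by
    intro g g' hg hg'
    have hD : (GammaInterval.Gamma (ZLex.mk (n : ℤ) (0:G₁)) hu₁).D ⟨ZLex.mk 0 g, ZLexAux.mem0 n hn hg⟩ ⟨ZLex.mk 0 g', ZLexAux.mem0 n hn hg'⟩ := by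
      apply ZLexAux.D_of_le
      show ZLex.mk ((0:ℤ)+0) (g+g') ≤ ZLex.mk (n:ℤ) 0
      refine Or.inl ?_
      show (0:ℤ) + 0 < (n:ℤ)
      omega
    have hadd : (GammaInterval.Gamma (ZLex.mk (n : ℤ) (0:G₁)) hu₁).add ⟨ZLex.mk 0 g, ZLexAux.mem0 n hn hg⟩ ⟨ZLex.mk 0 g', ZLexAux.mem0 n hn hg'⟩
        = ⟨ZLex.mk 0 (g+g'), ZLexAux.mem0 n hn (add_nonneg hg hg')⟩ := by
      apply Subtype.ext
      rw [ZLexAux.add_val n hu₁ hD]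
      show ZLex.mk ((0:ℤ)+0) (g+g') = ZLex.mk 0 (g+g')
      exact ZLexAux.mk_eq_mk (by simp) rfl
    obtain ⟨hD2, heq⟩ := hfadd' _ _ hD
    rw [hadd] at heq
    have h1 := h0spec ⟨ZLex.mk 0 (g+g'), ZLexAux.mem0 n hn (add_nonneg hg hg')⟩ (g+g')
      (add_nonneg hg hg') rfl
    rw [heq, ZLexAux.add_val n hu₂ hD2,
      h0spec ⟨ZLex.mk 0 g, ZLexAux.mem0 n hn hg⟩ g hg rfl,
      h0spec ⟨ZLex.mk 0 g', ZLexAux.mem0 n hn hg'⟩ g' hg' rfl] at h1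
    have h2 : ZLex.mk ((0:ℤ)+0) (h0 g + h0 g') = ZLex.mk 0 (h0 (g+g')) := h1
    exact ((ZLexAux.mk_inj h2).2).symm
  have hdec : ∀ g : G₁, ∃ p q : G₁, 0 ≤ p ∧ 0 ≤ q ∧ g = p + -q := by
    intro g
    obtain ⟨c, h0c, hgc⟩ := hdir₁ 0 g
    refine ⟨c, -g + c, h0c, ?_, ?_⟩
    · rw [le_neg_add_iff_add_le, add_zero]; exact hgc
    · rw [neg_add_rev, neg_neg, add_neg_cancel_left]
  have hwd : ∀ p q p' q' : G₁, 0 ≤ p → 0 ≤ q → 0 ≤ p' → 0 ≤ q' →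
      p + -q = p' + -q' → h0 p + -h0 q = h0 p' + -h0 q' := by
    intro p q p' q' hp hq hp' hq' hpq
    obtain ⟨r, hqr, hq'r⟩ := hdir₁ q q'
    have ha : 0 ≤ -q + r := by rw [le_neg_add_iff_add_le, add_zero]; exact hqr
    have ha' : 0 ≤ -q' + r := by rw [le_neg_add_iff_add_le, add_zero]; exact hq'r
    have h5 : h0 (-q + r) = -h0 q + h0 r := by
      have h1 : h0 q + h0 (-q + r) = h0 r := by
        rw [← h0add q (-q+r) hq ha, add_neg_cancel_left]
      rw [← h1, neg_add_cancel_left]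
    have h5' : h0 (-q' + r) = -h0 q' + h0 r := by
      have h1 : h0 q' + h0 (-q' + r) = h0 r := by
        rw [← h0add q' (-q'+r) hq' ha', add_neg_cancel_left]
      rw [← h1, neg_add_cancel_left]
    have h3 : p + (-q + r) = p' + (-q' + r) := by
      rw [← add_assoc, ← add_assoc, hpq]
    have h4 : h0 p + (-h0 q + h0 r) = h0 p' + (-h0 q' + h0 r) := by
      rw [← h5, ← h5', ← h0add p (-q+r) hp ha, ← h0add p' (-q'+r) hp' ha', h3]
    have h6 : (h0 p + -h0 q) + h0 r = (h0 p' + -h0 q') + h0 r := by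
      rw [add_assoc, add_assoc]; exact h4
    exact add_right_cancel h6
  set hfn : G₁ → G₂ := fun g =>
    h0 (hdec g).choose + -h0 (hdec g).choose_spec.choose with hfndef
  have hval : ∀ (g p q : G₁), 0 ≤ p → 0 ≤ q → g = p + -q → hfn g = h0 p + -h0 q := by
    intro g p q hp hq hg
    obtain ⟨hp0, hq0, hgeq⟩ := (hdec g).choose_spec.choose_spec
    simp only [hfndef]
    exact hwd _ _ p q hp0 hq0 hp hq (by rw [← hgeq, ← hg])
  have hpos_eq : ∀ g : G₁, 0 ≤ g → hfn g = h0 g := by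
    intro g hg
    rw [hval g g 0 hg (le_refl 0) (by simp), h0zero, neg_zero, add_zero]
  have hfadd2 : ∀ a b : G₁, hfn (a + b) = hfn a + hfn b := by
    intro a b
    obtain ⟨p₁, q₁, hp₁, hq₁, hd₁⟩ := hdec a
    obtain ⟨p₂, q₂, hp₂, hq₂, hd₂⟩ := hdec b
    obtain ⟨p₃, q₃, hp₃, hq₃, hd₃⟩ := hdec (-q₁ + p₂)
    have hkey : (q₁ + p₃) + -q₃ = p₂ + -(0:G₁) := by
      rw [neg_zero, add_zero, add_assoc, ← hd₃, add_neg_cancel_left]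
    have hkey2 : h0 (q₁ + p₃) + -h0 q₃ = h0 p₂ + -h0 0 :=
      hwd _ _ _ _ (add_nonneg hq₁ hp₃) hq₃ hp₂ (le_refl 0) hkey
    rw [h0zero, neg_zero, add_zero, h0add q₁ p₃ hq₁ hp₃] at hkey2
    have hkey3 : h0 p₃ + -h0 q₃ = -h0 q₁ + h0 p₂ := by
      rw [← hkey2, add_assoc, neg_add_cancel_left]
    have hsum : a + b = (p₁ + p₃) + -(q₂ + q₃) := by
      rw [hd₁, hd₂, neg_add_rev, add_assoc, add_assoc]
      congr 1
      rw [← add_assoc, ← add_assoc, hd₃]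
    rw [hval (a+b) (p₁+p₃) (q₂+q₃) (add_nonneg hp₁ hp₃) (add_nonneg hq₂ hq₃) hsum,
      hval a p₁ q₁ hp₁ hq₁ hd₁, hval b p₂ q₂ hp₂ hq₂ hd₂,
      h0add p₁ p₃ hp₁ hp₃, h0add q₂ q₃ hq₂ hq₃, neg_add_rev, add_assoc, add_assoc]
    congr 1
    rw [← add_assoc, ← add_assoc, hkey3]
  refine ⟨AddMonoidHom.mk' hfn hfadd2, ⟨?_, ?_⟩, ?_⟩
  · intro g hg
    show 0 ≤ hfn g
    rw [hpos_eq g hg]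
    exact h0nonneg g hg
  · intro x g hg hx
    show (f x).1 = ZLex.mk 0 (hfn g)
    rw [hpos_eq g hg]
    exact h0spec x g hg hx
  · rintro h' ⟨h'pos, h'val⟩
    ext g
    show h' g = hfn g
    obtain ⟨p, q, hp, hq, hd⟩ := hdec g
    have hp' : h' p = h0 p := by
      have h := h'val ⟨ZLex.mk 0 p, ZLexAux.mem0 n hn hp⟩ p hp rfl
      rw [h0spec ⟨ZLex.mk 0 p, ZLexAux.mem0 n hn hp⟩ p hp rfl] at h
      exact ((ZLexAux.mk_inj h).2).symm
    have hq' : h' q = h0 q := by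
      have h := h'val ⟨ZLex.mk 0 q, ZLexAux.mem0 n hn hq⟩ q hq rfl
      rw [h0spec ⟨ZLex.mk 0 q, ZLexAux.mem0 n hn hq⟩ q hq rfl] at h
      exact ((ZLexAux.mk_inj h).2).symm
    calc h' g = h' p + -(h' q) := by rw [hd, map_add, map_neg]
      _ = h0 p + -h0 q := by rw [hp', hq']
      _ = hfn g := (hval g p q hp hq hd).symm
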